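/- Let S be a finite multiset of naturals, B a base of length k, and suppose the base B' = B extended by one element p is formed. Then the sums and carries of S in B' agree with those of S in B at all positions j ≤ k−1, and consequently sum_carry(S_{(B')}) can be computed from sum_carry(S_{(B)}) by recomputing only the contributions of the last two digit columns. -/
import Mathlib


/-- The weight of digit position `i` in mixed radix base `B`: product of the first `i` radices. -/
def weight (B : List ℕ) (i : ℕ) : ℕ := (B.take i).prod

/-- The `i`-th digit of `v` in mixed radix base `B` (the most significant digit, at
position `B.length`, is `v / B.prod` and is unbounded). -/
def digit (B : List ℕ) (v i : ℕ) : ℕ :=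
  if i < B.length then (v / weight B i) % B.getD i 1 else v / B.prod

/-- The sum of the digits of `v` in base `B`. -/
def digitSum (B : List ℕ) (v : ℕ) : ℕ :=
  ∑ i ∈ Finset.range (B.length + 1), digit B v i

/-- The sum of digits of all elements of the multiset `S` in base `B`. -/
def sumDigits (S : Multiset ℕ) (B : List ℕ) : ℕ :=
  (S.map (digitSum B)).sum

/-- Column sum `s_j`: the sum of the `j`-th digits of the elements of `S` in base `B`. -/
def colSum (S : Multiset ℕ) (B : List ℕ) (j : ℕ) : ℕ :=
  (S.map (fun v => digit B v j)).sum

/-- The carries: `c 0 = 0` and `c (j+1) = (s j + c j) div B(j)`. -/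
def carry (S : Multiset ℕ) (B : List ℕ) : ℕ → ℕ
  | 0 => 0
  | j + 1 => (colSum S B j + carry S B j) / B.getD j 1

/-- `sum_carry(S_(B)) = Σ_{j=0}^{k} (s_j + c_j)`. -/
def sumCarry (S : Multiset ℕ) (B : List ℕ) : ℕ :=
  ∑ j ∈ Finset.range (B.length + 1), (colSum S B j + carry S B j)

theorem stmt19 (S : Multiset ℕ) (B : List ℕ) (hB : ∀ x ∈ B, 2 ≤ x)
    (p : ℕ) (hp : 2 ≤ p) :
    (∀ j < B.length,
        colSum S (B ++ [p]) j = colSum S B j ∧ carry S (B ++ [p]) j = carry S B j) ∧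
    sumCarry S (B ++ [p]) =
      (∑ j ∈ Finset.range B.length, (colSum S B j + carry S B j)) +
        (colSum S (B ++ [p]) B.length + carry S (B ++ [p]) B.length) +
        (colSum S (B ++ [p]) (B.length + 1) + carry S (B ++ [p]) (B.length + 1)) := by
  have hdig : ∀ v j, j < B.length → digit (B ++ [p]) v j = digit B v j := by
    intro v j hj
    simp only [digit, List.length_append, List.length_singleton]
    rw [if_pos hj, if_pos (by omega)]
    have h1 : weight (B ++ [p]) j = weight B j := by
      simp [weight, List.take_append_of_le_length (le_of_lt hj)]
    have h2 : (B ++ [p]).getD j 1 = B.getD j 1 := by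
      simp [List.getD, List.getElem?_append_left hj]
    rw [h1, h2]
  have hcol : ∀ j < B.length, colSum S (B ++ [p]) j = colSum S B j := by
    intro j hj
    simp only [colSum]
    congr 1
    exact Multiset.map_congr rfl (fun v _ => hdig v j hj)
  have hcar : ∀ j, j ≤ B.length → carry S (B ++ [p]) j = carry S B j := by
    intro j
    induction j with
    | zero => intro _; rfl
    | succ n ih =>
      intro hn
      have hn' : n < B.length := by omega
      simp only [carry, ih (le_of_lt hn'), hcol n hn']
      congr 1
      simp [List.getD, List.getElem?_append_left hn']
  refine ⟨fun j hj => ⟨hcol j hj, hcar j (le_of_lt hj)⟩, ?_⟩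
  have hlen : (B ++ [p]).length = B.length + 1 := by simp
  rw [sumCarry, hlen]
  rw [Finset.sum_range_succ, Finset.sum_range_succ]
  congr 1
  · congr 1
    apply Finset.sum_congr rfl
    intro j hj
    rw [Finset.mem_range] at hj
    rw [hcol j hj, hcar j (le_of_lt hj)]
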